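/- Let (V, E, o, t, inv) be a finite connected multigraph, let m, m' : E → ℝ^d be 1-forms with the same flux function, and let φ, φ' : E → ℝ be 1-forms with the same flux function. Then for every θ ∈ ℝ^d there exists a unitary diagonal operator W(θ) on ℂ^V (multiplication by unimodular scalars depending on the vertex) such that Δ_{m',φ'}(θ) = W(θ)⁻¹ ∘ Δ_{m,φ}(θ) ∘ W(θ); in particular, for every θ the fiber magnetic Laplacians Δ_{m,φ}(θ) and Δ_{m',φ'}(θ) are unitarily equivalent and have the same eigenvalues. (Paper: Theorem 4.4(ii) and Theorem 2.1(iii) at the level of fiber operators.) -/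

import Mathlib

open scoped Classical
open Finset

noncomputable section

/-- The degree of a vertex: the number of oriented edges starting at it. -/
def mdeg {V E : Type} [Fintype E] (o : E → V) (v : V) : ℕ :=
  (Finset.univ.filter fun e => o e = v).card

/-- The combinatorial magnetic Laplacian `Δ_α`. -/
def magLap {V E : Type} [Fintype E] (o t : E → V) (α : E → ℝ)
    (f : V → ℂ) (v : V) : ℂ :=
  ∑ e ∈ Finset.univ.filter (fun e => o e = v),
    (f v - Complex.exp (Complex.I * (α e : ℂ)) * f (t e))

/-- The fiber magnetic Laplacian `Δ_{m,φ}(θ)`. -/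
def fiberLap {V E : Type} [Fintype E] {d : ℕ} (o t : E → V)
    (m : E → Fin d → ℝ) (φ : E → ℝ) (θ : Fin d → ℝ) (f : V → ℂ) (v : V) : ℂ :=
  (mdeg o v : ℂ) * f v -
    ∑ e ∈ Finset.univ.filter (fun e => o e = v),
      Complex.exp (Complex.I * ((φ e + ∑ i, m e i * θ i : ℝ) : ℂ)) * f (t e)

/-- Standard inner product on `ℂ^V` (conjugate-linear in the first argument). -/
def dotC {V : Type} [Fintype V] (f g : V → ℂ) : ℂ :=
  ∑ v, (starRingEnd ℂ) (f v) * g v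

/-- `lam` lists the eigenvalues of the operator `T` on `ℂ^V` in nondecreasing
order, counted with multiplicity (witnessed by an orthonormal eigenbasis). -/
def IsEigList {V : Type} [Fintype V] (T : (V → ℂ) → (V → ℂ))
    (lam : Fin (Fintype.card V) → ℝ) : Prop :=
  Monotone lam ∧ ∃ u : Fin (Fintype.card V) → (V → ℂ),
    (∀ i j, dotC (u i) (u j) = if i = j then (1 : ℂ) else 0) ∧
    ∀ i, T (u i) = fun v => ((lam i : ℝ) : ℂ) * u i v

/-- A closed walk in the multigraph. -/
def IsClosedWalk {V E : Type} (o t : E → V) {k : ℕ} (c : Fin (k + 1) → E) : Prop :=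
  (∀ i : Fin k, t (c i.castSucc) = o (c i.succ)) ∧ t (c (Fin.last k)) = o (c 0)

/-- Two forms have the same flux along every closed walk. -/
def SameFlux {V E W : Type} [AddCommMonoid W] (o t : E → V) (b b' : E → W) : Prop :=
  ∀ (k : ℕ) (c : Fin (k + 1) → E), IsClosedWalk o t c →
    ∑ i, b (c i) = ∑ i, b' (c i)

/-- Connectivity of the multigraph: any two distinct vertices are the endpoints
of some walk. -/
def MGConnected {V E : Type} (o t : E → V) : Prop :=
  ∀ u v : V, u ≠ v → ∃ (k : ℕ) (c : Fin (k + 1) → E),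
    (∀ i : Fin k, t (c i.castSucc) = o (c i.succ)) ∧ o (c 0) = u ∧ t (c (Fin.last k)) = v

/-- The set of fluxes of a form along all closed walks. -/
def fluxSet {V E W : Type} [AddCommMonoid W] (o t : E → V) (b : E → W) : Set W :=
  {w | ∃ (k : ℕ) (c : Fin (k + 1) → E), IsClosedWalk o t c ∧ ∑ i, b (c i) = w}

/-- The number of oriented edges in the support of a form. -/
def suppCard {E : Type} [Fintype E] {W : Type} [Zero W] (b : E → W) : ℕ :=
  (Finset.univ.filter fun e => b e ≠ 0).card

/-- The integer lattice `ℤ^d` inside `ℝ^d`. -/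
def intLattice (d : ℕ) : Set (Fin d → ℝ) :=
  {w | ∀ i, ∃ z : ℤ, w i = (z : ℝ)}

lemma sum_map_neg_aux {E : Type} (β : E → ℝ) (inv : E → E)
    (hβ : ∀ e, β (inv e) = -β e) (l : List E) :
    (List.map (β ∘ inv) l).sum = -(List.map β l).sum := by
  induction l with
  | nil => simp
  | cons a l ih => simp [Function.comp, ih, hβ]; ring

/-- Auxiliary: list walks. -/
def WalkL {V E : Type} (o t : E → V) (u v : V) (l : List E) : Prop :=
  l.Chain' (fun a b => t a = o b) ∧
  (∃ a ∈ l.head?, o a = u) ∧ (∃ b ∈ l.getLast?, t b = v)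

lemma WalkL.ne_nil {V E : Type} {o t : E → V} {u v : V} {l : List E}
    (h : WalkL o t u v l) : l ≠ [] := by
  rcases h.2.1 with ⟨a, ha, -⟩
  intro h0; simp [h0] at ha

lemma WalkL.single {V E : Type} (o t : E → V) (e : E) :
    WalkL o t (o e) (t e) [e] := by
  refine ⟨List.isChain_singleton e, ⟨e, ?_, rfl⟩, ⟨e, ?_, rfl⟩⟩ <;> simp

lemma WalkL.append {V E : Type} {o t : E → V} {u v w : V} {l₁ l₂ : List E}
    (h₁ : WalkL o t u v l₁) (h₂ : WalkL o t v w l₂) :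
    WalkL o t u w (l₁ ++ l₂) := by
  obtain ⟨c₁, ⟨a₁, ha₁, hoa₁⟩, ⟨b₁, hb₁, htb₁⟩⟩ := h₁
  obtain ⟨c₂, ⟨a₂, ha₂, hoa₂⟩, ⟨b₂, hb₂, htb₂⟩⟩ := h₂
  refine ⟨c₁.append c₂ ?_, ?_, ?_⟩
  · intro x hx y hy
    rw [hx] at hb₁; rw [hy] at ha₂
    cases Option.some.inj hb₁
    cases Option.some.inj ha₂
    rw [htb₁, hoa₂]
  · refine ⟨a₁, ?_, hoa₁⟩
    rw [List.head?_append, ha₁]; rfl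
  · refine ⟨b₂, ?_, htb₂⟩
    rw [List.getLast?_append, hb₂]; rfl

lemma WalkL.revInv {V E : Type} {o t : E → V} (inv : E → E)
    (hoi : ∀ e, o (inv e) = t e) (hti : ∀ e, t (inv e) = o e)
    {u v : V} {l : List E} (h : WalkL o t u v l) :
    WalkL o t v u (l.reverse.map inv) := by
  obtain ⟨c, ⟨a, ha, hoa⟩, ⟨b, hb, htb⟩⟩ := h
  refine ⟨?_, ⟨inv b, ?_, ?_⟩, ⟨inv a, ?_, ?_⟩⟩
  · show List.IsChain _ _
    rw [List.isChain_map, List.isChain_reverse]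
    refine List.IsChain.imp ?_ c
    intro x y hxy
    simp only [flip, hti, hoi, hxy]
  · rw [List.head?_map, List.head?_reverse, hb]; rfl
  · rw [hoi, htb]
  · rw [List.getLast?_map, List.getLast?_reverse, ha]; rfl
  · rw [hti, hoa]

/-- A closed list walk yields a closed `Fin`-indexed walk with the same sum. -/
lemma WalkL.closed_sum_eq_zero {V E : Type} {o t : E → V} (β : E → ℝ)
    (hflux : ∀ (k : ℕ) (c : Fin (k + 1) → E), IsClosedWalk o t c → ∑ i, β (c i) = 0)
    {v : V} {l : List E} (h : WalkL o t v v l) : (l.map β).sum = 0 := by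
  have hne := h.ne_nil
  obtain ⟨c, ⟨a, ha, hoa⟩, ⟨b, hb, htb⟩⟩ := h
  have hlen : l.length - 1 + 1 = l.length := Nat.succ_pred_eq_of_pos (List.length_pos_iff.2 hne)
  set k := l.length - 1 with hk
  set cf : Fin (k + 1) → E := fun i => l.get (Fin.cast hlen i) with hcf
  have hclosed : IsClosedWalk o t cf := by
    constructor
    · intro i
      have := List.isChain_iff_getElem.1 c i.1 (by omega)
      convert this using 3 <;> simp [hcf]
    · have h0 : cf 0 = l.head hne := by
        have := List.head?_eq_head hne
        rw [this] at ha
        cases Option.some.inj ha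
        simp only [hcf]
        rw [← List.head?_eq_head hne] at *
        rcases l with _ | ⟨x, l'⟩
        · exact absurd rfl hne
        · rfl
      have hlast : cf (Fin.last k) = l.getLast hne := by
        simp only [hcf]
        rw [List.getLast_eq_getElem]
        congr 1
      rw [h0, hlast]
      rw [List.getLast?_eq_getLast hne] at hb
      rw [List.head?_eq_head hne] at ha
      cases Option.some.inj hb
      cases Option.some.inj ha
      rw [htb, hoa]
  have hs := hflux k cf hclosed
  calc (l.map β).sum = ∑ i : Fin (k+1), β (cf i) := by
        conv_lhs => rw [← List.ofFn_get l, List.map_ofFn, List.sum_ofFn]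
        exact (Fintype.sum_equiv (finCongr hlen) _ _ (fun i => rfl)).symm
    _ = 0 := hs

/-- Existence of a potential for a flux-free 1-form on a connected multigraph. -/
lemma exists_potential {V E : Type} [Nonempty V]
    (o t : E → V) (inv : E → E)
    (hoi : ∀ e, o (inv e) = t e) (hti : ∀ e, t (inv e) = o e)
    (hconn : MGConnected o t) (β : E → ℝ) (hβ : ∀ e, β (inv e) = - β e)
    (hflux : ∀ (k : ℕ) (c : Fin (k + 1) → E), IsClosedWalk o t c → ∑ i, β (c i) = 0) :
    ∃ w : V → ℝ, ∀ e, w (t e) = w (o e) + β e := by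
  classical
  obtain ⟨v₀⟩ := (inferInstance : Nonempty V)
  -- for each v ≠ v₀ choose a list walk from v₀ to v
  have hwalk : ∀ v : V, v ≠ v₀ → ∃ l : List E, WalkL o t v₀ v l := by
    intro v hv
    obtain ⟨k, c, hc, h0, hl⟩ := hconn v₀ v (Ne.symm hv)
    refine ⟨List.ofFn c, ?_, ⟨c 0, ?_, h0⟩, ⟨c (Fin.last k), ?_, hl⟩⟩
    · show List.IsChain _ _
      rw [List.isChain_iff_getElem]
      intro i hi
      have hi' : i < k := by simpa using hi
      rw [List.getElem_ofFn, List.getElem_ofFn]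
      exact hc ⟨i, hi'⟩
    · rw [List.ofFn_succ]; rfl
    · rw [List.getLast?_eq_getLast (by simp), List.getLast_eq_getElem, List.getElem_ofFn,
        Option.mem_def, Option.some.injEq]
      exact (congrArg c (Fin.ext (by simp [Fin.last]))).symm
  choose lw hlw using hwalk
  set w : V → ℝ := fun v => if hv : v = v₀ then 0 else ((lw v hv).map β).sum with hw
  refine ⟨w, ?_⟩
  intro e
  -- four cases
  by_cases hA : o e = v₀ <;> by_cases hB : t e = v₀
  · -- closed walk [e]
    have : WalkL o t v₀ v₀ [e] := by
      have := WalkL.single o t e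
      rw [hA, hB] at this; exact this
    have h0 := WalkL.closed_sum_eq_zero β hflux this
    simp only [List.map_cons, List.map_nil, List.sum_cons, List.sum_nil, add_zero] at h0
    simp only [hw]
    rw [dif_pos hB, dif_pos hA]
    linarith
  · have hwb := hlw (t e) hB
    have hsingle : WalkL o t v₀ (t e) [e] := by
      have := WalkL.single o t e; rw [hA] at this; exact this
    have hcl : WalkL o t v₀ v₀ ([e] ++ ((lw (t e) hB).reverse.map inv)) :=
      hsingle.append (WalkL.revInv inv hoi hti hwb)
    have h0 := WalkL.closed_sum_eq_zero β hflux hcl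
    rw [List.map_append, List.sum_append, List.map_map, List.map_reverse,
      List.sum_reverse] at h0
    rw [sum_map_neg_aux β inv hβ] at h0
    simp only [List.map_cons, List.map_nil, List.sum_cons, List.sum_nil, add_zero] at h0
    simp only [hw]
    rw [dif_neg hB, dif_pos hA]
    linarith
  · have hwa := hlw (o e) hA
    have hsingle : WalkL o t (o e) v₀ [e] := by
      have := WalkL.single o t e; rw [hB] at this; exact this
    have hcl : WalkL o t v₀ v₀ ((lw (o e) hA) ++ [e]) := hwa.append hsingle
    have h0 := WalkL.closed_sum_eq_zero β hflux hcl
    rw [List.map_append, List.sum_append] at h0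
    simp only [List.map_cons, List.map_nil, List.sum_cons, List.sum_nil, add_zero] at h0
    simp only [hw]
    rw [dif_pos hB, dif_neg hA]
    linarith
  · have hwa := hlw (o e) hA
    have hwb := hlw (t e) hB
    have hsingle : WalkL o t (o e) (t e) [e] := WalkL.single o t e
    have hcl : WalkL o t v₀ v₀ ((lw (o e) hA) ++ ([e] ++ ((lw (t e) hB).reverse.map inv))) :=
      hwa.append (hsingle.append (WalkL.revInv inv hoi hti hwb))
    have h0 := WalkL.closed_sum_eq_zero β hflux hcl
    rw [List.map_append, List.sum_append, List.map_append, List.sum_append,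
      List.map_map, List.map_reverse, List.sum_reverse] at h0
    rw [sum_map_neg_aux β inv hβ] at h0
    simp only [List.map_cons, List.map_nil, List.sum_cons, List.sum_nil, add_zero] at h0
    simp only [hw]
    rw [dif_neg hB, dif_neg hA]
    linarith

/-- If `m, m'` have the same flux function and `φ, φ'` have the same flux
function on a connected multigraph, then for every `θ` the fiber magnetic
Laplacians `Δ_{m,φ}(θ)` and `Δ_{m',φ'}(θ)` are unitarily equivalent via a
diagonal unitary multiplication by unimodular scalars; in particular they have
the same eigenvalues. -/
theorem fiberLap_unitary_equivalence
    {V E : Type} [Fintype V] [Fintype E] [Nonempty V] {d : ℕ}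
    (o t : E → V) (inv : E → E)
    (hfp : ∀ e, inv e ≠ e) (hinv : ∀ e, inv (inv e) = e)
    (hoi : ∀ e, o (inv e) = t e) (hti : ∀ e, t (inv e) = o e)
    (hconn : MGConnected o t)
    (m m' : E → Fin d → ℝ) (hm : ∀ e, m (inv e) = - m e)
    (hm' : ∀ e, m' (inv e) = - m' e) (hfluxm : SameFlux o t m m')
    (φ φ' : E → ℝ) (hφ : ∀ e, φ (inv e) = - φ e)
    (hφ' : ∀ e, φ' (inv e) = - φ' e) (hfluxφ : SameFlux o t φ φ') :
    ∀ θ : Fin d → ℝ, ∃ w : V → ℝ,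
      (∀ (f : V → ℂ) (v : V),
        Complex.exp (Complex.I * (w v : ℂ)) * fiberLap o t m' φ' θ f v =
          fiberLap o t m φ θ (fun u => Complex.exp (Complex.I * (w u : ℂ)) * f u) v) ∧
      ∀ μ : ℝ,
        (∃ f : V → ℂ, f ≠ 0 ∧ ∀ v, fiberLap o t m' φ' θ f v = (μ : ℂ) * f v) ↔
        (∃ g : V → ℂ, g ≠ 0 ∧ ∀ v, fiberLap o t m φ θ g v = (μ : ℂ) * g v) := by
  intro θ
  set β : E → ℝ :=
    fun e => (φ' e + ∑ i, m' e i * θ i) - (φ e + ∑ i, m e i * θ i) with hβdef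
  have hβinv : ∀ e, β (inv e) = - β e := by
    intro e
    simp only [hβdef, hφ e, hφ' e, hm e, hm' e, Pi.neg_apply, neg_mul,
      Finset.sum_neg_distrib]
    ring
  have hβflux : ∀ (k : ℕ) (c : Fin (k + 1) → E), IsClosedWalk o t c →
      ∑ i, β (c i) = 0 := by
    intro k c hc
    have h1 := hfluxφ k c hc
    have h2 := hfluxm k c hc
    have h2' : ∀ j, ∑ i, m (c i) j = ∑ i, m' (c i) j := by
      intro j
      have := congrFun h2 j
      simpa [Finset.sum_apply] using this
    have e1 : ∑ i, ∑ j, m' (c i) j * θ j = ∑ j, (∑ i, m' (c i) j) * θ j := by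
      rw [Finset.sum_comm]
      exact Finset.sum_congr rfl (fun j _ => (Finset.sum_mul _ _ _).symm)
    have e2 : ∑ i, ∑ j, m (c i) j * θ j = ∑ j, (∑ i, m (c i) j) * θ j := by
      rw [Finset.sum_comm]
      exact Finset.sum_congr rfl (fun j _ => (Finset.sum_mul _ _ _).symm)
    simp only [hβdef]
    rw [Finset.sum_sub_distrib, Finset.sum_add_distrib, Finset.sum_add_distrib,
      e1, e2, h1]
    have e3 : ∑ j, (∑ i, m (c i) j) * θ j = ∑ j, (∑ i, m' (c i) j) * θ j :=
      Finset.sum_congr rfl (fun j _ => by rw [h2'])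
    rw [e3]
    ring
  obtain ⟨w, hwpot⟩ := exists_potential o t inv hoi hti hconn β hβinv hβflux
  have hmain : ∀ (f : V → ℂ) (v : V),
      Complex.exp (Complex.I * (w v : ℂ)) * fiberLap o t m' φ' θ f v =
        fiberLap o t m φ θ (fun u => Complex.exp (Complex.I * (w u : ℂ)) * f u) v := by
    intro f v
    simp only [fiberLap]
    rw [mul_sub, Finset.mul_sum]
    congr 1
    · ring
    · refine Finset.sum_congr rfl ?_
      intro e he
      simp only [Finset.mem_filter] at he
      have hoe : o e = v := he.2
      have hpot := hwpot e
      rw [hoe] at hpot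
      have hcast : ((w (t e) : ℝ) : ℂ) =
          (w v : ℂ) + ((φ' e + ∑ i, m' e i * θ i : ℝ) : ℂ)
            - ((φ e + ∑ i, m e i * θ i : ℝ) : ℂ) := by
        rw [hpot]
        simp only [hβdef]
        push_cast
        ring
      rw [← mul_assoc, ← mul_assoc, ← Complex.exp_add, ← Complex.exp_add]
      congr 2
      linear_combination -Complex.I * hcast
  refine ⟨w, hmain, ?_⟩
  intro μ
  constructor
  · rintro ⟨f, hf0, hf⟩
    refine ⟨fun u => Complex.exp (Complex.I * (w u : ℂ)) * f u, ?_, ?_⟩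
    · intro h
      apply hf0
      funext u
      have := congrFun h u
      simp only [Pi.zero_apply] at this ⊢
      exact (mul_eq_zero.1 this).resolve_left (Complex.exp_ne_zero _)
    · intro v
      rw [← hmain f v, hf v]
      ring
  · rintro ⟨g, hg0, hg⟩
    set f : V → ℂ := fun u => (Complex.exp (Complex.I * (w u : ℂ)))⁻¹ * g u with hfdef
    have hfg : (fun u => Complex.exp (Complex.I * (w u : ℂ)) * f u) = g := by
      funext u
      simp only [hfdef]
      rw [← mul_assoc, mul_inv_cancel₀ (Complex.exp_ne_zero _), one_mul]
    refine ⟨f, ?_, ?_⟩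
    · intro h
      apply hg0
      funext u
      have := congrFun h u
      simp only [hfdef, Pi.zero_apply] at this ⊢
      exact (mul_eq_zero.1 this).resolve_left (inv_ne_zero (Complex.exp_ne_zero _))
    · intro v
      have h1 := hmain f v
      rw [hfg, hg v] at h1
      have h2 : g v = Complex.exp (Complex.I * (w v : ℂ)) * f v := by
        rw [← congrFun hfg v]
      rw [h2] at h1
      have h3 : Complex.exp (Complex.I * (w v : ℂ)) * fiberLap o t m' φ' θ f v =
          Complex.exp (Complex.I * (w v : ℂ)) * ((μ : ℂ) * f v) := by
        rw [h1]; ring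
      exact mul_left_cancel₀ (Complex.exp_ne_zero _) h3
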